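/- Let G be a finite simple graph with n vertices and X a proper coloring of G using |X| nonempty colors. Then the chromatic strength of G satisfies s(G) ≤ max(⌈(1 + √(1 + 8(Σ(X) − n)))/2⌉ − 1, |X|). In particular, every proper coloring of G using k colors with k(k−1)/2 + n ≥ Σ(X) and k > |X| has weighted sum at least Σ(X), so some optimal sum coloring uses at most max(⌈(1 + √(1 + 8(Σ(X) − n)))/2⌉ − 1, |X|) colors. -/
import Mathlib


/-- A proper coloring of `G` with positive natural-number colors. -/
def IsProperColoring {V : Type*} (G : SimpleGraph V) (c : V → ℕ) : Prop :=
  (∀ u v, G.Adj u v → c u ≠ c v) ∧ ∀ v, 1 ≤ c v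

/-- The chromatic sum `Σ(G)`. -/
noncomputable def chromaticSum {V : Type*} [Fintype V] (G : SimpleGraph V) : ℕ :=
  sInf { s | ∃ c : V → ℕ, IsProperColoring G c ∧ s = ∑ v, c v }

/-- The chromatic strength `s(G)`. -/
noncomputable def strength {V : Type*} [Fintype V] (G : SimpleGraph V) : ℕ :=
  sInf { k | ∃ c : V → ℕ, IsProperColoring G c ∧ (∀ v, c v ≤ k) ∧
    ∑ v, c v = chromaticSum G }

/-- The number of (nonempty) colors used by a coloring. -/
def numColors {V : Type*} [Fintype V] [DecidableEq V] (c : V → ℕ) : ℕ :=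
  (Finset.univ.image c).card


lemma aux_sum_distinct (s : Finset ℕ) (hs : ∀ i ∈ s, 1 ≤ i) :
    s.card * (s.card + 1) ≤ 2 * ∑ i ∈ s, i := by
  induction s using Finset.strongInduction with
  | _ s ih =>
    rcases s.eq_empty_or_nonempty with rfl | hne
    · simp
    · have hmax := s.max'_mem hne
      set m := s.max' hne with hm
      have hsub : s ⊆ Finset.Icc 1 m := fun i hi =>
        Finset.mem_Icc.mpr ⟨hs i hi, Finset.le_max' s i hi⟩
      have hcard : s.card ≤ m := by
        have := Finset.card_le_card hsub
        simpa [Nat.card_Icc] using this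
      have herase := ih (s.erase m) (Finset.erase_ssubset hmax)
        (fun i hi => hs i (Finset.mem_of_mem_erase hi))
      have hec : (s.erase m).card = s.card - 1 := Finset.card_erase_of_mem hmax
      have hsum : m + ∑ i ∈ s.erase m, i = ∑ i ∈ s, i :=
        Finset.add_sum_erase s (fun i => i) hmax
      obtain ⟨t, ht⟩ : ∃ t, s.card = t + 1 :=
        ⟨s.card - 1, by have := Finset.card_pos.mpr hne; omega⟩
      rw [hec, ht] at herase
      simp only [Nat.add_sub_cancel] at herase
      rw [ht] at hcard ⊢
      nlinarith [herase, hcard, hsum]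

lemma aux_sum_image_le {V : Type*} [Fintype V] [DecidableEq V] (c : V → ℕ) (f : ℕ → ℕ) :
    ∑ i ∈ Finset.univ.image c, f i ≤ ∑ v, f (c v) := by
  rw [← Finset.sum_fiberwise_of_maps_to (g := c) (t := Finset.univ.image c)
    (fun v _ => Finset.mem_image_of_mem c (Finset.mem_univ v)) (fun v => f (c v))]
  apply Finset.sum_le_sum
  intro i hi
  obtain ⟨v, _, hv⟩ := Finset.mem_image.mp hi
  have hvmem : v ∈ Finset.univ.filter (fun x => c x = i) := by
    simp [hv]
  calc f i = f (c v) := by rw [hv]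
    _ ≤ _ := Finset.single_le_sum (f := fun x => f (c x)) (fun x _ => Nat.zero_le _) hvmem
lemma aux_key_bound {V : Type*} [Fintype V] [DecidableEq V] (c : V → ℕ)
    (h1 : ∀ v, 1 ≤ c v) :
    numColors c * (numColors c - 1) + 2 * Fintype.card V ≤ 2 * ∑ v, c v := by
  classical
  set I := Finset.univ.image c with hI
  set k := I.card with hk
  have hIpos : ∀ i ∈ I, 1 ≤ i := by
    intro i hi
    obtain ⟨v, _, hv⟩ := Finset.mem_image.mp hi
    exact hv ▸ h1 v
  have hA : k * (k + 1) ≤ 2 * ∑ i ∈ I, i := aux_sum_distinct I hIpos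
  have hB : ∑ i ∈ I, (i - 1) ≤ ∑ v, (c v - 1) := aux_sum_image_le c (· - 1)
  have hC : ∑ i ∈ I, (i - 1) + k = ∑ i ∈ I, i := by
    calc ∑ i ∈ I, (i - 1) + k = ∑ i ∈ I, ((i - 1) + 1) := by
          rw [Finset.sum_add_distrib]; simp [hk]
      _ = ∑ i ∈ I, i :=
          Finset.sum_congr rfl fun i hi => Nat.sub_add_cancel (hIpos i hi)
  have hD : ∑ v, (c v - 1) + Fintype.card V = ∑ v, c v := by
    calc ∑ v, (c v - 1) + Fintype.card V = ∑ v, ((c v - 1) + 1) := by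
          rw [Finset.sum_add_distrib]; simp [Finset.card_univ]
      _ = ∑ v, c v :=
          Finset.sum_congr rfl fun v _ => Nat.sub_add_cancel (h1 v)
  have hQP : ∀ n : ℕ, n * (n - 1) + 2 * n = n * (n + 1) := by
    intro n
    cases n with
    | zero => rfl
    | succ m => simp [Nat.succ_sub_one]; ring
  have hQPk := hQP k
  have hnum : numColors c = k := rfl
  rw [hnum]
  omega

lemma aux_compress {V : Type*} [Fintype V] [DecidableEq V] (G : SimpleGraph V)
    (c : V → ℕ) (hc : IsProperColoring G c) :
    ∃ c₂ : V → ℕ, IsProperColoring G c₂ ∧ (∀ v, c₂ v ≤ numColors c) ∧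
      ∑ v, c₂ v ≤ ∑ v, c v := by
  classical
  set I := Finset.univ.image c with hI
  refine ⟨fun v => (I.filter (· ≤ c v)).card, ⟨?_, ?_⟩, ?_, ?_⟩
  · -- proper
    have hmono : ∀ a b : V, c a < c b →
        (I.filter (· ≤ c a)).card < (I.filter (· ≤ c b)).card := by
      intro a b hab
      apply Finset.card_lt_card
      have hsubfil : I.filter (· ≤ c a) ⊆ I.filter (· ≤ c b) := by
        intro i hi
        rw [Finset.mem_filter] at hi ⊢
        exact ⟨hi.1, le_trans hi.2 hab.le⟩
      rw [Finset.ssubset_iff_of_subset hsubfil]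
      exact ⟨c b, Finset.mem_filter.mpr
        ⟨Finset.mem_image_of_mem c (Finset.mem_univ b), le_refl _⟩,
        fun h => absurd (Finset.mem_filter.mp h).2 (not_le.mpr hab)⟩
    intro u v huv
    have hne := hc.1 u v huv
    rcases lt_or_gt_of_ne hne with h | h
    · exact Nat.ne_of_lt (hmono u v h)
    · exact Nat.ne_of_gt (hmono v u h)
  · -- positivity
    intro v
    refine Finset.card_pos.mpr ⟨c v, Finset.mem_filter.mpr
      ⟨Finset.mem_image_of_mem c (Finset.mem_univ v), le_refl _⟩⟩
  · -- bounded by numColors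
    intro v
    exact Finset.card_le_card (Finset.filter_subset _ _)
  · -- sum le
    apply Finset.sum_le_sum
    intro v _
    have : I.filter (· ≤ c v) ⊆ Finset.Icc 1 (c v) := by
      intro i hi
      obtain ⟨hiI, hile⟩ := Finset.mem_filter.mp hi
      obtain ⟨w, _, hw⟩ := Finset.mem_image.mp hiI
      exact Finset.mem_Icc.mpr ⟨hw ▸ hc.2 w, hile⟩
    have := Finset.card_le_card this
    simpa [Nat.card_Icc] using this

theorem strength_stmt_8 {V : Type*} [Fintype V] [DecidableEq V]
    (G : SimpleGraph V) (c : V → ℕ) (hc : IsProperColoring G c) :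
    strength G ≤
      max (⌈(1 + Real.sqrt (1 + 8 * ((∑ v, c v) - Fintype.card V : ℕ))) / 2⌉₊ - 1)
        (numColors c) ∧
    ∀ (c' : V → ℕ), IsProperColoring G c' →
      ∀ k : ℕ, numColors c' = k → (∑ v, c v) ≤ k * (k - 1) / 2 + Fintype.card V →
        numColors c < k → (∑ v, c v) ≤ ∑ v, c' v := by
  classical
  have hn : Fintype.card V ≤ ∑ v, c v := by
    calc Fintype.card V = ∑ _v : V, 1 := by simp
      _ ≤ ∑ v, c v := Finset.sum_le_sum fun v _ => hc.2 v
  constructor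
  · -- strength bound
    have hSmem : chromaticSum G ∈ {s | ∃ c0 : V → ℕ, IsProperColoring G c0 ∧ s = ∑ v, c0 v} :=
      Nat.sInf_mem ⟨∑ v, c v, c, hc, rfl⟩
    obtain ⟨cs, hcs, hcssum⟩ := hSmem
    obtain ⟨c₂, hc₂, hc₂b, hc₂s⟩ := aux_compress G c hc
    have hchrom2 : chromaticSum G ≤ ∑ v, c₂ v := Nat.sInf_le ⟨c₂, hc₂, rfl⟩
    by_cases hcase : ∑ v, c₂ v = chromaticSum G
    · have : strength G ≤ numColors c := Nat.sInf_le ⟨c₂, hc₂, hc₂b, hcase⟩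
      exact le_trans this (le_max_right _ _)
    · have hlt : chromaticSum G < ∑ v, c v :=
        lt_of_lt_of_le (lt_of_le_of_ne hchrom2 (Ne.symm hcase)) hc₂s
      obtain ⟨c₃, hc₃, hc₃b, hc₃s⟩ := aux_compress G cs hcs
      have h3 : ∑ v, c₃ v = chromaticSum G := by
        refine le_antisymm ?_ (Nat.sInf_le ⟨c₃, hc₃, rfl⟩)
        rw [hcssum]; exact hc₃s
      have hstr : strength G ≤ numColors cs := Nat.sInf_le ⟨c₃, hc₃, hc₃b, h3⟩
      set k := numColors cs with hkdef
      have hkb := aux_key_bound cs hcs.2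
      rw [← hcssum] at hkb
      set D : ℕ := (∑ v, c v) - Fintype.card V with hD
      have hklt : k * (k - 1) < 2 * D := by rw [hkdef, hD]; omega
      have hr1 : (1:ℝ) ≤ Real.sqrt (1 + 8 * D) := by
        have h0 : (0:ℝ) ≤ (D:ℝ) := Nat.cast_nonneg D
        nlinarith [Real.sq_sqrt (show (0:ℝ) ≤ 1 + 8 * D by linarith),
          Real.sqrt_nonneg (1 + 8 * (D:ℝ))]
      have hkr : (k:ℝ) < (1 + Real.sqrt (1 + 8 * D)) / 2 := by
        rcases Nat.eq_zero_or_pos k with hk0 | hkpos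
        · rw [hk0]; push_cast; linarith
        · obtain ⟨m, hm⟩ : ∃ m, k = m + 1 := ⟨k - 1, by omega⟩
          have hmlt : (m + 1) * m < 2 * D := by
            rw [hm] at hklt; simpa using hklt
          have hmltR : ((m:ℝ) + 1) * m < 2 * D := by exact_mod_cast hmlt
          have hsq : (2 * (k:ℝ) - 1) < Real.sqrt (1 + 8 * D) := by
            have hpos : (0:ℝ) ≤ 2 * (k:ℝ) - 1 := by
              have : (1:ℝ) ≤ (k:ℝ) := by exact_mod_cast hkpos
              linarith
            rw [show (2 * (k:ℝ) - 1) = (2 * m + 1 : ℝ) by rw [hm]; push_cast; ring]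
            have h1 : ((2:ℝ) * m + 1) ^ 2 < 1 + 8 * D := by nlinarith
            have h0 : (0:ℝ) ≤ 2 * (m:ℝ) + 1 := by positivity
            exact (Real.lt_sqrt h0).mpr h1
          linarith
      have hceil : k < ⌈(1 + Real.sqrt (1 + 8 * (D:ℕ))) / 2⌉₊ := by
        have := Nat.le_ceil ((1 + Real.sqrt (1 + 8 * (D:ℕ))) / 2)
        have hfin : (k:ℝ) < (⌈(1 + Real.sqrt (1 + 8 * (D:ℕ))) / 2⌉₊ : ℝ) :=
          lt_of_lt_of_le hkr this
        exact_mod_cast hfin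
      have : strength G ≤ ⌈(1 + Real.sqrt (1 + 8 * (D:ℕ))) / 2⌉₊ - 1 := by omega
      exact le_trans this (le_max_left _ _)
  · -- part 2
    intro c' hc' k hk hsum _
    have hb := aux_key_bound c' hc'.2
    rw [hk] at hb
    have hdvd : 2 ∣ k * (k - 1) := by
      cases k with
      | zero => simp
      | succ m =>
        simp only [Nat.succ_sub_one]
        have : Even ((m + 1) * m) := by
          rw [mul_comm]; exact Nat.even_mul_succ_self m
        exact this.two_dvd
    omega
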